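/- Let 0 < c ≤ C < ∞ and let H be a probability measure on ℝ supported in [c, C], with mean μ_H := ∫ τ dH(τ). Let γ > 1 and suppose s* > 0 satisfies 1 − 1/γ = ∫ 1/(1 + τ·s*) dH(τ). Then s* ≥ 1/(μ_H·(γ−1)). -/
import Mathlib


open MeasureTheory

/-- The tighter lower bound (eq:tighter:lb): if `H` is a probability measure supported in
`[c, C]` with `0 < c ≤ C`, mean `μ_H = ∫ τ dH(τ)`, `γ > 1`, and `s* > 0` solves
`1 − 1/γ = ∫ 1/(1 + τ s*) dH(τ)`, then `s* ≥ 1/(μ_H (γ−1))`. -/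
theorem stieltjes_limit_jensen_bound
    (c C : ℝ) (hc : 0 < c) (hcC : c ≤ C)
    (H : Measure ℝ) [IsProbabilityMeasure H]
    (hsupp : ∀ᵐ τ ∂H, τ ∈ Set.Icc c C)
    (μH : ℝ) (hμH : μH = ∫ τ, τ ∂H)
    (γ : ℝ) (hγ : 1 < γ)
    (s : ℝ) (hs : 0 < s)
    (heq : 1 - 1 / γ = ∫ τ, 1 / (1 + τ * s) ∂H) :
    1 / (μH * (γ - 1)) ≤ s := by
  have hint1 : Integrable (fun τ : ℝ => τ) H := by
    apply Integrable.mono' (integrable_const C) measurable_id.aestronglyMeasurable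
    filter_upwards [hsupp] with τ hτ
    simp only [id_eq, Real.norm_eq_abs]
    rw [abs_of_pos (hc.trans_le hτ.1)]
    exact hτ.2
  have hμc : c ≤ μH := by
    rw [hμH]
    calc c = ∫ _, c ∂H := by simp
    _ ≤ ∫ τ, τ ∂H := integral_mono_ae (integrable_const c) hint1
        (by filter_upwards [hsupp] with τ hτ; exact hτ.1)
  have hμ : 0 < μH := hc.trans_le hμc
  set b := 1 + μH * s with hb
  have hbpos : 0 < b := by positivity
  have key : 1 / b ≤ ∫ τ, 1 / (1 + τ * s) ∂H := by
    have hmeas : AEStronglyMeasurable (fun τ : ℝ => 1 / (1 + τ * s)) H := by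
      apply Measurable.aestronglyMeasurable
      exact (measurable_const.div ((measurable_id.mul_const s).const_add 1))
    have hint2 : Integrable (fun τ : ℝ => 1 / (1 + τ * s)) H := by
      apply Integrable.mono' (integrable_const (1 : ℝ)) hmeas
      filter_upwards [hsupp] with τ hτ
      have hτ0 : 0 < τ := hc.trans_le hτ.1
      have h1 : 1 ≤ 1 + τ * s := by nlinarith
      rw [Real.norm_eq_abs, abs_of_pos (by positivity)]
      rw [div_le_one (by positivity)]
      exact h1
    have hintm : Integrable (fun τ : ℝ => s / b ^ 2 * (τ - μH)) H := by
      exact (hint1.sub (integrable_const μH)).const_mul _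
    have hint3 : Integrable (fun τ : ℝ => 1 / b - s / b ^ 2 * (τ - μH)) H := by
      exact (integrable_const _).sub hintm
    have hz : (∫ τ, (s / b ^ 2 * (τ - μH)) ∂H) = 0 := by
      rw [integral_const_mul, integral_sub hint1 (integrable_const μH)]
      simp [hμH]
    calc 1 / b = ∫ τ, (1 / b - s / b ^ 2 * (τ - μH)) ∂H := by
          rw [integral_sub (integrable_const _) hintm, hz, integral_const]
          simp
      _ ≤ ∫ τ, 1 / (1 + τ * s) ∂H := by
          apply integral_mono_ae hint3 hint2
          filter_upwards [hsupp] with τ hτ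
          have hτ0 : 0 < τ := hc.trans_le hτ.1
          set a := 1 + τ * s with ha
          have hapos : 0 < a := by positivity
          have hab : s / b ^ 2 * (τ - μH) = (a - b) / b ^ 2 := by
            rw [div_mul_eq_mul_div, ha, hb]; ring_nf
          have hdiff : 1 / a - (1 / b - s / b ^ 2 * (τ - μH)) = (a - b) ^ 2 / (a * b ^ 2) := by
            rw [hab]; field_simp; ring
          linarith [div_nonneg (sq_nonneg (a - b)) (by positivity : (0:ℝ) ≤ a * b ^ 2), hdiff]
  rw [← heq] at key
  -- 1/b ≤ (γ-1)/γ  ⇒  γ ≤ (γ-1) * b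
  have hγ1 : 0 < γ - 1 := by linarith
  have hγ0 : 0 < γ := by linarith
  have h2 : γ ≤ (γ - 1) * b := by
    have : 1 / b ≤ (γ - 1) / γ := by
      calc 1 / b ≤ 1 - 1 / γ := key
      _ = (γ - 1) / γ := by field_simp
    rw [div_le_div_iff₀ hbpos hγ0] at this
    linarith
  rw [div_le_iff₀ (by positivity)]
  nlinarith
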